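/- Outer shift property of the multidimensional Gaussian inverse set: Fix a d×d positive semidefinite real matrix V and ε ∈ (0,1). Then there exist constants D₂ > 0 and δ₂ > 0 such that for all 0 ≤ δ < δ₂: Q_inv(V, ε+δ) + D₂·δ·1 ⊆ Q_inv(V,ε); equivalently, for every z ∈ ℝ^d with P[Z ≤ z] ≥ 1−ε−δ one has P[Z ≤ z + D₂·δ·1] ≥ 1−ε, where 1 := (1,…,1) ∈ ℝ^d. -/

import Mathlib

open MeasureTheory Set Pointwise
open scoped ENNReal NNReal

/-- `P[Z ≤ z]` for the centered Gaussian vector `Z = A·W` in `ℝ^d`, where `W` is a vector of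
`d` independent standard Gaussians (so `Z` has covariance `A·Aᵀ`). -/
noncomputable def stdGaussianCdf {d : ℕ} (A : Matrix (Fin d) (Fin d) ℝ) (z : Fin d → ℝ) : ℝ :=
  ((MeasureTheory.Measure.map (fun w => A.mulVec w)
      (MeasureTheory.Measure.pi fun _ : Fin d => ProbabilityTheory.gaussianReal 0 1))
    {y | ∀ i, y i ≤ z i}).toReal

namespace QinvShift

lemma volume_image_affine (c r : ℝ) (hc : 0 < c) (S : Set ℝ) :
    volume ((fun a => c * a + r) '' S) = ENNReal.ofReal c * volume S := by
  have h1 : (fun a : ℝ => c * a + r) '' S = (fun x : ℝ => x + r) '' ((fun a : ℝ => c * a) '' S) := by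
    rw [← Set.image_comp]; rfl
  have h2 : (fun x : ℝ => x + r) '' ((fun a : ℝ => c * a) '' S)
      = (fun x : ℝ => x + (-r)) ⁻¹' ((fun a : ℝ => c * a) '' S) := by
    ext x
    simp only [Set.mem_image, Set.mem_preimage]
    constructor
    · rintro ⟨y, hy, rfl⟩; simpa using hy
    · intro hx; exact ⟨x + (-r), hx, by ring⟩
  have h3 : (fun a : ℝ => c * a) '' S = c • S := by
    ext x
    simp [Set.mem_smul_set, smul_eq_mul]
  rw [h1, h2, measure_preimage_add_right, h3, Measure.addHaar_smul]
  simp [abs_of_pos hc]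

lemma sumset_compact (lam : ℝ) (h0 : 0 < lam) (h1 : lam < 1) {K L C : Set ℝ}
    (hK : IsCompact K) (hL : IsCompact L) (hKne : K.Nonempty) (hLne : L.Nonempty)
    (hsub : ∀ a ∈ K, ∀ b ∈ L, (1 - lam) * a + lam * b ∈ C) :
    ENNReal.ofReal (1 - lam) * volume K + ENNReal.ofReal lam * volume L ≤ volume C := by
  set m1 := sSup K with hm1
  set m2 := sInf L with hm2
  have hm1K : m1 ∈ K := hK.sSup_mem hKne
  have hm2L : m2 ∈ L := hL.sInf_mem hLne
  set X := (fun a : ℝ => (1 - lam) * a + lam * m2) '' K with hX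
  set Y := (fun b : ℝ => lam * b + (1 - lam) * m1) '' L with hY
  have hXC : X ⊆ C := by rintro x ⟨a, ha, rfl⟩; exact hsub a ha m2 hm2L
  have hYC : Y ⊆ C := by
    rintro x ⟨b, hb, rfl⟩
    have := hsub m1 hm1K b hb
    simpa [add_comm] using this
  have hXcomp : IsCompact X := hK.image (by fun_prop)
  have hYcomp : IsCompact Y := hL.image (by fun_prop)
  have hvolX : volume X = ENNReal.ofReal (1 - lam) * volume K :=
    volume_image_affine (1 - lam) (lam * m2) (by linarith) K
  have hvolY : volume Y = ENNReal.ofReal lam * volume L :=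
    volume_image_affine lam ((1 - lam) * m1) h0 L
  have hinter : X ∩ Y ⊆ {(1 - lam) * m1 + lam * m2} := by
    rintro x ⟨⟨a, ha, hxa⟩, ⟨b, hb, hxb⟩⟩
    have ha' : a ≤ m1 := le_csSup hK.bddAbove ha
    have hb' : m2 ≤ b := csInf_le hL.bddBelow hb
    have hxa' : (1 - lam) * a + lam * m2 = x := hxa
    have hxb' : lam * b + (1 - lam) * m1 = x := hxb
    have h1' : x ≤ (1 - lam) * m1 + lam * m2 := by nlinarith
    have h2' : (1 - lam) * m1 + lam * m2 ≤ x := by nlinarith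
    simp [le_antisymm h1' h2']
  have hXY0 : volume (X ∩ Y) = 0 :=
    measure_mono_null hinter (measure_singleton _)
  have hunion : volume (X ∪ Y) = volume X + volume Y := by
    have := measure_union_add_inter (μ := volume) X hYcomp.measurableSet
    rw [hXY0, add_zero] at this
    exact this
  calc ENNReal.ofReal (1 - lam) * volume K + ENNReal.ofReal lam * volume L
      = volume (X ∪ Y) := by rw [hunion, hvolX, hvolY]
    _ ≤ volume C := measure_mono (Set.union_subset hXC hYC)

lemma sumset_measure (lam : ℝ) (h0 : 0 < lam) (h1 : lam < 1) {A B C : Set ℝ}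
    (hA : MeasurableSet A) (hB : MeasurableSet B)
    (hAne : A.Nonempty) (hBne : B.Nonempty)
    (hsub : ∀ a ∈ A, ∀ b ∈ B, (1 - lam) * a + lam * b ∈ C) :
    ENNReal.ofReal (1 - lam) * volume A + ENNReal.ofReal lam * volume B ≤ volume C := by
  obtain ⟨a₀, ha₀⟩ := hAne
  obtain ⟨b₀, hb₀⟩ := hBne
  set An : ℕ → Set ℝ := fun n => A ∩ Icc (-(n : ℝ)) n ∪ {a₀} with hAn
  set Bn : ℕ → Set ℝ := fun n => B ∩ Icc (-(n : ℝ)) n ∪ {b₀} with hBn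
  have hmonoA : Monotone An := by
    intro m n hmn
    apply Set.union_subset_union_left _ (Set.inter_subset_inter_right _ _)
    exact Set.Icc_subset_Icc (neg_le_neg (by exact_mod_cast hmn)) (by exact_mod_cast hmn)
  have hmonoB : Monotone Bn := by
    intro m n hmn
    apply Set.union_subset_union_left _ (Set.inter_subset_inter_right _ _)
    exact Set.Icc_subset_Icc (neg_le_neg (by exact_mod_cast hmn)) (by exact_mod_cast hmn)
  have hsubA : ∀ n, An n ⊆ A := fun n =>
    Set.union_subset Set.inter_subset_left (by simpa using ha₀)
  have hsubB : ∀ n, Bn n ⊆ B := fun n =>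
    Set.union_subset Set.inter_subset_left (by simpa using hb₀)
  have hUA : (⋃ n, An n) = A := by
    apply Set.Subset.antisymm (Set.iUnion_subset hsubA)
    intro x hx
    obtain ⟨n, hn⟩ := exists_nat_ge |x|
    exact Set.mem_iUnion.2 ⟨n, Or.inl ⟨hx, by
      constructor
      · linarith [neg_abs_le x]
      · linarith [le_abs_self x]⟩⟩
  have hUB : (⋃ n, Bn n) = B := by
    apply Set.Subset.antisymm (Set.iUnion_subset hsubB)
    intro x hx
    obtain ⟨n, hn⟩ := exists_nat_ge |x|
    exact Set.mem_iUnion.2 ⟨n, Or.inl ⟨hx, by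
      constructor
      · linarith [neg_abs_le x]
      · linarith [le_abs_self x]⟩⟩
  have hmeasA : ∀ n, MeasurableSet (An n) := fun n =>
    (hA.inter measurableSet_Icc).union (measurableSet_singleton _)
  have hmeasB : ∀ n, MeasurableSet (Bn n) := fun n =>
    (hB.inter measurableSet_Icc).union (measurableSet_singleton _)
  have hfinA : ∀ n, volume (An n) ≠ ⊤ := by
    intro n
    have : volume (An n) ≤ volume (Icc (-(n : ℝ)) n) + volume ({a₀} : Set ℝ) := by
      refine le_trans (measure_mono ?_) (measure_union_le _ _)
      exact Set.union_subset_union_left _ Set.inter_subset_right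
    refine ne_top_of_le_ne_top ?_ this
    simp [Real.volume_Icc]
  have hfinB : ∀ n, volume (Bn n) ≠ ⊤ := by
    intro n
    have : volume (Bn n) ≤ volume (Icc (-(n : ℝ)) n) + volume ({b₀} : Set ℝ) := by
      refine le_trans (measure_mono ?_) (measure_union_le _ _)
      exact Set.union_subset_union_left _ Set.inter_subset_right
    refine ne_top_of_le_ne_top ?_ this
    simp [Real.volume_Icc]
  -- per-n bound
  have hn : ∀ n, ENNReal.ofReal (1 - lam) * volume (An n) + ENNReal.ofReal lam * volume (Bn n)
      ≤ volume C := by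
    intro n
    apply ENNReal.le_of_forall_pos_le_add
    intro η hη _
    have hη2 : ((η : ℝ≥0∞) / 2) ≠ 0 := by
      simp [ENNReal.div_eq_zero_iff]
      exact_mod_cast hη.ne'
    obtain ⟨K, hKsub, hKcomp, hKvol⟩ :=
      (hmeasA n).exists_isCompact_lt_add (hfinA n) hη2
    obtain ⟨L, hLsub, hLcomp, hLvol⟩ :=
      (hmeasB n).exists_isCompact_lt_add (hfinB n) hη2
    set K' := K ∪ {a₀} with hK'
    set L' := L ∪ {b₀} with hL'
    have hK'comp : IsCompact K' := hKcomp.union isCompact_singleton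
    have hL'comp : IsCompact L' := hLcomp.union isCompact_singleton
    have hK'sub : K' ⊆ A := Set.union_subset (hKsub.trans (hsubA n)) (by simpa using ha₀)
    have hL'sub : L' ⊆ B := Set.union_subset (hLsub.trans (hsubB n)) (by simpa using hb₀)
    have hmain := sumset_compact lam h0 h1 hK'comp hL'comp
      ⟨a₀, Or.inr rfl⟩ ⟨b₀, Or.inr rfl⟩
      (fun a ha b hb => hsub a (hK'sub ha) b (hL'sub hb))
    have hKv : volume (An n) ≤ volume K' + (η : ℝ≥0∞) / 2 :=
      le_trans hKvol.le (add_le_add_left (measure_mono Set.subset_union_left) _)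
    have hLv : volume (Bn n) ≤ volume L' + (η : ℝ≥0∞) / 2 :=
      le_trans hLvol.le (add_le_add_left (measure_mono Set.subset_union_left) _)
    calc ENNReal.ofReal (1 - lam) * volume (An n) + ENNReal.ofReal lam * volume (Bn n)
        ≤ ENNReal.ofReal (1 - lam) * (volume K' + (η : ℝ≥0∞) / 2)
          + ENNReal.ofReal lam * (volume L' + (η : ℝ≥0∞) / 2) := by
          exact add_le_add (mul_le_mul_right hKv _) (mul_le_mul_right hLv _)
      _ = (ENNReal.ofReal (1 - lam) * volume K' + ENNReal.ofReal lam * volume L')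
          + (ENNReal.ofReal (1 - lam) + ENNReal.ofReal lam) * ((η : ℝ≥0∞) / 2) := by ring
      _ ≤ volume C + 1 * ((η : ℝ≥0∞) / 2) := by
          apply add_le_add hmain
          apply mul_le_mul_left
          rw [← ENNReal.ofReal_add (by linarith) (by linarith)]
          simp
      _ ≤ volume C + η := by
          rw [one_mul]
          exact add_le_add_right (ENNReal.half_le_self.trans le_rfl) _
  -- limit
  have hTA : Filter.Tendsto (fun n => volume (An n)) Filter.atTop (nhds (volume A)) := by
    have := tendsto_measure_iUnion_atTop (μ := volume) hmonoA
    rwa [hUA] at this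
  have hTB : Filter.Tendsto (fun n => volume (Bn n)) Filter.atTop (nhds (volume B)) := by
    have := tendsto_measure_iUnion_atTop (μ := volume) hmonoB
    rwa [hUB] at this
  have hT : Filter.Tendsto
      (fun n => ENNReal.ofReal (1 - lam) * volume (An n) + ENNReal.ofReal lam * volume (Bn n))
      Filter.atTop
      (nhds (ENNReal.ofReal (1 - lam) * volume A + ENNReal.ofReal lam * volume B)) := by
    apply Filter.Tendsto.add
    · exact ENNReal.Tendsto.const_mul hTA (Or.inr (by simp))
    · exact ENNReal.Tendsto.const_mul hTB (Or.inr (by simp))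
  exact le_of_tendsto hT (Filter.Eventually.of_forall hn)

lemma layercake {α : Type*} [MeasurableSpace α] (μ : Measure α) [SigmaFinite μ]
    {f : α → ℝ≥0∞} (hf : Measurable f) :
    ∫⁻ x, f x ∂μ = ∫⁻ t in Set.Ioi (0 : ℝ), μ {x | ENNReal.ofReal t < f x} ∂volume := by
  have hS : MeasurableSet {p : α × ℝ | ENNReal.ofReal p.2 < f p.1} := by
    apply measurableSet_lt
    · exact ENNReal.measurable_ofReal.comp measurable_snd
    · exact hf.comp measurable_fst
  have hind : ∀ x t, ({p : α × ℝ | ENNReal.ofReal p.2 < f p.1}).indicator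
      (1 : α × ℝ → ℝ≥0∞) (x, t)
      = ({t : ℝ | ENNReal.ofReal t < f x}).indicator (1 : ℝ → ℝ≥0∞) t := by
    intro x t
    simp only [Set.indicator_apply, Set.mem_setOf_eq, Pi.one_apply]
  have hpt : ∀ x, f x = ∫⁻ t in Set.Ioi (0 : ℝ),
      ({p : α × ℝ | ENNReal.ofReal p.2 < f p.1}).indicator (1 : α × ℝ → ℝ≥0∞) (x, t)
        ∂volume := by
    intro x
    have hmeas : MeasurableSet {t : ℝ | ENNReal.ofReal t < f x} := by
      apply measurableSet_lt ENNReal.measurable_ofReal measurable_const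
    calc f x = volume ({t : ℝ | ENNReal.ofReal t < f x} ∩ Set.Ioi 0) := by
          rcases eq_or_ne (f x) ⊤ with htop | htop
          · have heq : {t : ℝ | ENNReal.ofReal t < f x} ∩ Set.Ioi 0 = Set.Ioi (0:ℝ) := by
              ext t; simp [htop, ENNReal.ofReal_lt_top]
            rw [heq, htop, Real.volume_Ioi]
          · have heq : {t : ℝ | ENNReal.ofReal t < f x} ∩ Set.Ioi 0 = Set.Ioo 0 (f x).toReal := by
              ext t
              simp only [Set.mem_inter_iff, Set.mem_setOf_eq, Set.mem_Ioi, Set.mem_Ioo]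
              constructor
              · rintro ⟨h1, h2⟩
                exact ⟨h2, (ENNReal.ofReal_lt_iff_lt_toReal h2.le htop).1 h1⟩
              · rintro ⟨h1, h2⟩
                exact ⟨(ENNReal.ofReal_lt_iff_lt_toReal h1.le htop).2 h2, h1⟩
            rw [heq, Real.volume_Ioo, sub_zero, ENNReal.ofReal_toReal htop]
      _ = ∫⁻ t in Set.Ioi (0 : ℝ),
            ({t : ℝ | ENNReal.ofReal t < f x}).indicator (1 : ℝ → ℝ≥0∞) t ∂volume := by
          rw [lintegral_indicator_one hmeas, Measure.restrict_apply hmeas]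
      _ = _ := by
          apply lintegral_congr
          intro t
          rw [hind]
  calc ∫⁻ x, f x ∂μ
      = ∫⁻ x, ∫⁻ t in Set.Ioi (0 : ℝ),
          ({p : α × ℝ | ENNReal.ofReal p.2 < f p.1}).indicator (1 : α × ℝ → ℝ≥0∞) (x, t)
            ∂volume ∂μ := by
        apply lintegral_congr hpt
    _ = ∫⁻ t in Set.Ioi (0 : ℝ), ∫⁻ x,
          ({p : α × ℝ | ENNReal.ofReal p.2 < f p.1}).indicator (1 : α × ℝ → ℝ≥0∞) (x, t)
            ∂μ ∂volume := by
        apply lintegral_lintegral_swap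
        exact (measurable_one.indicator hS).aemeasurable
    _ = ∫⁻ t in Set.Ioi (0 : ℝ), μ {x | ENNReal.ofReal t < f x} ∂volume := by
        apply lintegral_congr
        intro t
        have hmeas : MeasurableSet {x : α | ENNReal.ofReal t < f x} :=
          measurableSet_lt measurable_const hf
        have heq : ∀ x, ({p : α × ℝ | ENNReal.ofReal p.2 < f p.1}).indicator
            (1 : α × ℝ → ℝ≥0∞) (x, t)
            = ({x : α | ENNReal.ofReal t < f x}).indicator (1 : α → ℝ≥0∞) x := by
          intro x
          simp only [Set.indicator_apply, Set.mem_setOf_eq, Pi.one_apply]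
        rw [lintegral_congr heq, lintegral_indicator_one hmeas]

lemma iSup_rpow (u : ℕ → ℝ≥0∞) (p : ℝ) (hp : 0 < p) : (⨆ n, u n) ^ p = ⨆ n, u n ^ p := by
  apply le_antisymm
  · have h1 : ∀ n, u n ≤ (⨆ n, u n ^ p) ^ (1 / p) := by
      intro n
      have h2 : u n = (u n ^ p) ^ (1 / p) := by
        rw [← ENNReal.rpow_mul, mul_one_div_cancel hp.ne', ENNReal.rpow_one]
      rw [h2]
      exact ENNReal.rpow_le_rpow (le_iSup (fun n => u n ^ p) n) (by positivity)
    calc (⨆ n, u n) ^ p ≤ ((⨆ n, u n ^ p) ^ (1 / p)) ^ p :=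
          ENNReal.rpow_le_rpow (iSup_le h1) hp.le
      _ = ⨆ n, u n ^ p := by
          rw [← ENNReal.rpow_mul, one_div_mul_cancel hp.ne', ENNReal.rpow_one]
  · exact iSup_le fun n => ENNReal.rpow_le_rpow (le_iSup u n) hp.le

lemma iSup_mul_iSup_monotone (u v : ℕ → ℝ≥0∞) (hu : Monotone u) (hv : Monotone v) :
    (⨆ n, u n) * (⨆ n, v n) = ⨆ n, u n * v n := by
  apply le_antisymm
  · rw [ENNReal.iSup_mul]
    apply iSup_le; intro n
    rw [ENNReal.mul_iSup]
    apply iSup_le; intro m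
    exact le_iSup_of_le (max n m)
      (mul_le_mul' (hu (le_max_left n m)) (hv (le_max_right n m)))
  · exact iSup_le fun n => mul_le_mul' (le_iSup u n) (le_iSup v n)

lemma geom_mean_ennreal (lam : ℝ) (h0 : 0 < lam) (h1 : lam < 1) (a b : ℝ≥0∞) :
    a ^ (1 - lam) * b ^ lam ≤ ENNReal.ofReal (1 - lam) * a + ENNReal.ofReal lam * b := by
  rcases eq_or_ne a ⊤ with rfl | ha
  · have : ENNReal.ofReal (1 - lam) * (⊤ : ℝ≥0∞) = ⊤ := by
      rw [ENNReal.mul_top]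
      simp only [ne_eq, ENNReal.ofReal_eq_zero, not_le]
      linarith
    rw [this, top_add]
    exact le_top
  rcases eq_or_ne b ⊤ with rfl | hb
  · have : ENNReal.ofReal lam * (⊤ : ℝ≥0∞) = ⊤ := by
      rw [ENNReal.mul_top]
      simp only [ne_eq, ENNReal.ofReal_eq_zero, not_le]
      linarith
    rw [this, add_top]
    exact le_top
  lift a to ℝ≥0 using ha
  lift b to ℝ≥0 using hb
  have key := NNReal.geom_mean_le_arith_mean2_weighted
    (Real.toNNReal (1 - lam)) (Real.toNNReal lam) a b ?hw
  case hw =>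
    rw [← Real.toNNReal_add (by linarith) h0.le]
    norm_num
  have hc1 : ((Real.toNNReal (1 - lam) : ℝ≥0) : ℝ) = 1 - lam := Real.coe_toNNReal _ (by linarith)
  have hc2 : ((Real.toNNReal lam : ℝ≥0) : ℝ) = lam := Real.coe_toNNReal _ h0.le
  rw [hc1, hc2] at key
  calc (a : ℝ≥0∞) ^ (1 - lam) * (b : ℝ≥0∞) ^ lam
      = ((a ^ (1 - lam) * b ^ lam : ℝ≥0) : ℝ≥0∞) := by
        rw [ENNReal.coe_mul, ENNReal.coe_rpow_of_nonneg _ (by linarith : (0:ℝ) ≤ 1 - lam),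
          ENNReal.coe_rpow_of_nonneg _ h0.le]
    _ ≤ ((Real.toNNReal (1 - lam) * a + Real.toNNReal lam * b : ℝ≥0) : ℝ≥0∞) := by
        exact_mod_cast ENNReal.coe_le_coe.2 key
    _ = ENNReal.ofReal (1 - lam) * a + ENNReal.ofReal lam * b := by
        rw [ENNReal.coe_add, ENNReal.coe_mul, ENNReal.coe_mul]
        rfl

lemma PL1_bounded (lam : ℝ) (h0 : 0 < lam) (h1 : lam < 1) {f g h : ℝ → ℝ≥0∞} {C : ℝ≥0∞}
    (hC : C ≠ ⊤) (hf : Measurable f) (hg : Measurable g) (hh : Measurable h)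
    (hfb : ∀ x, f x ≤ C) (hgb : ∀ x, g x ≤ C)
    (hyp : ∀ x y : ℝ, f x ^ (1 - lam) * g y ^ lam ≤ h ((1 - lam) * x + lam * y)) :
    (∫⁻ x, f x) ^ (1 - lam) * (∫⁻ x, g x) ^ lam ≤ ∫⁻ x, h x := by
  have hlam1 : (0:ℝ) < 1 - lam := by linarith
  set Mf := ⨆ x, f x with hMf_def
  set Mg := ⨆ x, g x with hMg_def
  have hMft : Mf ≠ ⊤ := ((iSup_le hfb).trans_lt (lt_top_iff_ne_top.2 hC)).ne
  have hMgt : Mg ≠ ⊤ := ((iSup_le hgb).trans_lt (lt_top_iff_ne_top.2 hC)).ne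
  by_cases hMf0 : Mf = 0
  · have hzero : ∫⁻ x, f x = 0 := by
      have hfz : f = fun _ => 0 :=
        funext fun x => le_antisymm ((le_iSup f x).trans hMf0.le) zero_le
      rw [hfz]; simp
    rw [hzero, ENNReal.zero_rpow_of_pos hlam1, zero_mul]; exact zero_le
  by_cases hMg0 : Mg = 0
  · have hzero : ∫⁻ x, g x = 0 := by
      have hgz : g = fun _ => 0 :=
        funext fun x => le_antisymm ((le_iSup g x).trans hMg0.le) zero_le
      rw [hgz]; simp
    rw [hzero, ENNReal.zero_rpow_of_pos h0, mul_zero]; exact zero_le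
  set c0 := Mf ^ (1 - lam) * Mg ^ lam with hc0_def
  have hc00 : c0 ≠ 0 := by
    apply mul_ne_zero
    · exact (ENNReal.rpow_pos_of_nonneg (pos_iff_ne_zero.2 hMf0) hlam1.le).ne'
    · exact (ENNReal.rpow_pos_of_nonneg (pos_iff_ne_zero.2 hMg0) h0.le).ne'
  have hc0t : c0 ≠ ⊤ :=
    ENNReal.mul_ne_top (ENNReal.rpow_ne_top_of_nonneg hlam1.le hMft)
      (ENNReal.rpow_ne_top_of_nonneg h0.le hMgt)
  set F := fun x => f x / Mf with hF_def
  set G := fun x => g x / Mg with hG_def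
  set H := fun y => h y / c0 with hH_def
  have hFm : Measurable F := hf.div measurable_const
  have hGm : Measurable G := hg.div measurable_const
  have hHm : Measurable H := hh.div measurable_const
  have hFsup : (⨆ x, F x) = 1 := by
    rw [hF_def, ← ENNReal.iSup_div, ← hMf_def, ENNReal.div_self hMf0 hMft]
  have hGsup : (⨆ x, G x) = 1 := by
    rw [hG_def, ← ENNReal.iSup_div, ← hMg_def, ENNReal.div_self hMg0 hMgt]
  have hFle : ∀ x, F x ≤ 1 := fun x => (le_iSup F x).trans hFsup.le
  have hGle : ∀ x, G x ≤ 1 := fun x => (le_iSup G x).trans hGsup.le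
  -- level-set inequality
  have hkey : ∀ t ∈ Set.Ioo (0:ℝ) 1,
      ENNReal.ofReal (1 - lam) * volume {x | ENNReal.ofReal t < F x}
        + ENNReal.ofReal lam * volume {x | ENNReal.ofReal t < G x}
      ≤ volume {y | ENNReal.ofReal t < H y} := by
    intro t ht
    have htne : (ENNReal.ofReal t) ≠ 0 := (ENNReal.ofReal_pos.2 ht.1).ne'
    have htlt1 : ENNReal.ofReal t < 1 := ENNReal.ofReal_lt_one.2 ht.2
    have hAne : {x | ENNReal.ofReal t < F x}.Nonempty := by
      have h' : ENNReal.ofReal t < ⨆ x, F x := hFsup.symm ▸ htlt1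
      obtain ⟨x, hx⟩ := lt_iSup_iff.1 h'
      exact ⟨x, hx⟩
    have hBne : {x | ENNReal.ofReal t < G x}.Nonempty := by
      have h' : ENNReal.ofReal t < ⨆ x, G x := hGsup.symm ▸ htlt1
      obtain ⟨x, hx⟩ := lt_iSup_iff.1 h'
      exact ⟨x, hx⟩
    apply sumset_measure lam h0 h1 (measurableSet_lt measurable_const hFm)
      (measurableSet_lt measurable_const hGm) hAne hBne
    intro a ha b hb
    simp only [Set.mem_setOf_eq] at ha hb ⊢
    have ha' : Mf * ENNReal.ofReal t < f a := by
      rw [mul_comm]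
      exact (ENNReal.lt_div_iff_mul_lt (Or.inl hMf0) (Or.inl hMft)).1 ha
    have hb' : Mg * ENNReal.ofReal t < g b := by
      rw [mul_comm]
      exact (ENNReal.lt_div_iff_mul_lt (Or.inl hMg0) (Or.inl hMgt)).1 hb
    rw [hH_def]
    rw [ENNReal.lt_div_iff_mul_lt (Or.inl hc00) (Or.inl hc0t)]
    have hfac0 : (Mg * ENNReal.ofReal t) ^ lam ≠ 0 :=
      (ENNReal.rpow_pos_of_nonneg
        (ENNReal.mul_pos hMg0 htne) h0.le).ne'
    have hfact : (Mg * ENNReal.ofReal t) ^ lam ≠ ⊤ :=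
      ENNReal.rpow_ne_top_of_nonneg h0.le (ENNReal.mul_ne_top hMgt ENNReal.ofReal_ne_top)
    have hτ : ENNReal.ofReal t ^ (1 - lam) * ENNReal.ofReal t ^ lam = ENNReal.ofReal t := by
      rw [← ENNReal.rpow_add _ _ htne ENNReal.ofReal_ne_top, sub_add_cancel, ENNReal.rpow_one]
    calc ENNReal.ofReal t * c0
        = (Mf * ENNReal.ofReal t) ^ (1 - lam) * (Mg * ENNReal.ofReal t) ^ lam := by
          rw [ENNReal.mul_rpow_of_nonneg _ _ hlam1.le, ENNReal.mul_rpow_of_nonneg _ _ h0.le,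
            hc0_def]
          conv_lhs => rw [← hτ]
          ring
      _ < f a ^ (1 - lam) * (Mg * ENNReal.ofReal t) ^ lam :=
          ENNReal.mul_lt_mul_left hfac0 hfact (ENNReal.rpow_lt_rpow ha' hlam1)
      _ ≤ f a ^ (1 - lam) * g b ^ lam :=
          mul_le_mul_right (ENNReal.rpow_le_rpow hb'.le h0.le) _
      _ ≤ h ((1 - lam) * a + lam * b) := hyp a b
  -- integral identities
  have hFint : ∫⁻ x, F x = (∫⁻ x, f x) / Mf := by
    simp only [hF_def, div_eq_mul_inv]
    rw [lintegral_mul_const' _ _ (by simp [hMf0])]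
  have hGint : ∫⁻ x, G x = (∫⁻ x, g x) / Mg := by
    simp only [hG_def, div_eq_mul_inv]
    rw [lintegral_mul_const' _ _ (by simp [hMg0])]
  have hHint : ∫⁻ y, H y = (∫⁻ y, h y) / c0 := by
    simp only [hH_def, div_eq_mul_inv]
    rw [lintegral_mul_const' _ _ (by simp [hc00])]
  -- layer cake restricted to (0,1)
  have hsplit : Set.Ioi (0:ℝ) = Set.Ioo 0 1 ∪ Set.Ici 1 := by
    ext t; simp only [Set.mem_Ioi, Set.mem_union, Set.mem_Ioo, Set.mem_Ici]
    constructor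
    · intro h'; rcases lt_or_ge t 1 with h''|h''
      exacts [Or.inl ⟨h', h''⟩, Or.inr h'']
    · rintro (⟨h',_⟩|h'); exacts [h', by linarith]
  have hdisj : Disjoint (Set.Ioo (0:ℝ) 1) (Set.Ici 1) := by
    rw [Set.disjoint_left]; rintro a ⟨_, ha2⟩ ha3; exact absurd ha3 (not_le.2 ha2)
  have hlayer : ∀ (u : ℝ → ℝ≥0∞), Measurable u → (∀ x, u x ≤ 1) →
      ∫⁻ x, u x = ∫⁻ t in Set.Ioo (0:ℝ) 1, volume {x | ENNReal.ofReal t < u x} ∂volume := by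
    intro u hum hule
    rw [layercake volume hum, hsplit, lintegral_union measurableSet_Ici hdisj]
    have hzero : ∀ t ∈ Set.Ici (1:ℝ), volume {x | ENNReal.ofReal t < u x} = 0 := by
      intro t ht
      have hempty : {x | ENNReal.ofReal t < u x} = (∅ : Set ℝ) := by
        ext x
        simp only [Set.mem_setOf_eq, Set.mem_empty_iff_false, iff_false, not_lt]
        exact (hule x).trans (ENNReal.one_le_ofReal.2 ht)
      rw [hempty, measure_empty]
    rw [setLIntegral_congr_fun_ae measurableSet_Ici
      (Filter.Eventually.of_forall hzero), lintegral_zero, add_zero]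
  have hFlayer := hlayer F hFm hFle
  have hGlayer := hlayer G hGm hGle
  have hHlayer : ∫⁻ t in Set.Ioo (0:ℝ) 1, volume {y | ENNReal.ofReal t < H y} ∂volume
      ≤ ∫⁻ y, H y := by
    rw [layercake volume hHm]
    exact lintegral_mono' (Measure.restrict_mono Set.Ioo_subset_Ioi_self le_rfl) le_rfl
  -- measurability in t
  have hmeasA : Measurable fun t : ℝ => volume {x | ENNReal.ofReal t < F x} := by
    apply Antitone.measurable
    intro s t hst
    exact measure_mono fun x hx => lt_of_le_of_lt (ENNReal.ofReal_le_ofReal hst) hx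
  have hmeasB : Measurable fun t : ℝ => volume {x | ENNReal.ofReal t < G x} := by
    apply Antitone.measurable
    intro s t hst
    exact measure_mono fun x hx => lt_of_le_of_lt (ENNReal.ofReal_le_ofReal hst) hx
  -- combine
  have hcomb : ENNReal.ofReal (1 - lam) * (∫⁻ x, F x) + ENNReal.ofReal lam * (∫⁻ x, G x)
      ≤ ∫⁻ y, H y := by
    rw [hFlayer, hGlayer]
    rw [← lintegral_const_mul' _ _ ENNReal.ofReal_ne_top,
      ← lintegral_const_mul' _ _ ENNReal.ofReal_ne_top,
      ← lintegral_add_left (hmeasA.const_mul _)]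
    refine le_trans (lintegral_mono_ae ?_) hHlayer
    rw [ae_restrict_iff' measurableSet_Ioo]
    exact Filter.Eventually.of_forall hkey
  have hgm := geom_mean_ennreal lam h0 h1 (∫⁻ x, F x) (∫⁻ x, G x)
  have hmain : (∫⁻ x, F x) ^ (1 - lam) * (∫⁻ x, G x) ^ lam ≤ (∫⁻ y, h y) / c0 :=
    hgm.trans (hcomb.trans_eq hHint)
  have hfin : (∫⁻ x, f x) ^ (1 - lam) * (∫⁻ x, g x) ^ lam
      = ((∫⁻ x, F x) ^ (1 - lam) * (∫⁻ x, G x) ^ lam) * c0 := by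
    have hf' : ∫⁻ x, f x = (∫⁻ x, F x) * Mf := by
      rw [hFint, ENNReal.div_mul_cancel hMf0 hMft]
    have hg' : ∫⁻ x, g x = (∫⁻ x, G x) * Mg := by
      rw [hGint, ENNReal.div_mul_cancel hMg0 hMgt]
    rw [hf', hg', ENNReal.mul_rpow_of_nonneg _ _ hlam1.le,
      ENNReal.mul_rpow_of_nonneg _ _ h0.le, hc0_def]
    ring
  rw [hfin]
  calc ((∫⁻ x, F x) ^ (1 - lam) * (∫⁻ x, G x) ^ lam) * c0
      ≤ ((∫⁻ y, h y) / c0) * c0 := mul_le_mul_left hmain _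
    _ = ∫⁻ y, h y := ENNReal.div_mul_cancel hc00 hc0t

theorem PL1 (lam : ℝ) (h0 : 0 < lam) (h1 : lam < 1) {f g h : ℝ → ℝ≥0∞}
    (hf : Measurable f) (hg : Measurable g) (hh : Measurable h)
    (hyp : ∀ x y : ℝ, f x ^ (1 - lam) * g y ^ lam ≤ h ((1 - lam) * x + lam * y)) :
    (∫⁻ x, f x) ^ (1 - lam) * (∫⁻ x, g x) ^ lam ≤ ∫⁻ x, h x := by
  have hlam1 : (0:ℝ) < 1 - lam := by linarith
  have hkey : ∀ N : ℕ, (∫⁻ x, min (f x) (N:ℝ≥0∞)) ^ (1 - lam)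
      * (∫⁻ x, min (g x) (N:ℝ≥0∞)) ^ lam ≤ ∫⁻ x, h x := by
    intro N
    apply PL1_bounded lam h0 h1 (C := (N:ℝ≥0∞)) (ENNReal.natCast_ne_top N)
      (hf.min measurable_const) (hg.min measurable_const) hh
      (fun x => min_le_right _ _) (fun x => min_le_right _ _)
    intro x y
    calc min (f x) (N:ℝ≥0∞) ^ (1 - lam) * min (g y) (N:ℝ≥0∞) ^ lam
        ≤ f x ^ (1 - lam) * g y ^ lam :=
          mul_le_mul' (ENNReal.rpow_le_rpow (min_le_left _ _) hlam1.le)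
            (ENNReal.rpow_le_rpow (min_le_left _ _) h0.le)
      _ ≤ _ := hyp x y
  have htrunc : ∀ (u : ℝ → ℝ≥0∞), Measurable u →
      ∫⁻ x, u x = ⨆ N : ℕ, ∫⁻ x, min (u x) (N:ℝ≥0∞) := by
    intro u hum
    calc ∫⁻ x, u x = ∫⁻ x, ⨆ N : ℕ, min (u x) (N:ℝ≥0∞) := by
          apply lintegral_congr
          intro x
          apply le_antisymm
          · rcases eq_or_ne (u x) ⊤ with htop|htop
            · rw [htop]
              have hmin : (fun N : ℕ => min (⊤:ℝ≥0∞) (N:ℝ≥0∞)) = fun N : ℕ => (N:ℝ≥0∞) :=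
                funext fun N => min_eq_right le_top
              rw [hmin, ENNReal.iSup_natCast]
            · obtain ⟨N, hN⟩ := ENNReal.exists_nat_gt htop
              exact le_iSup_of_le N (le_of_eq (min_eq_left hN.le).symm)
          · exact iSup_le fun N => min_le_left _ _
      _ = ⨆ N : ℕ, ∫⁻ x, min (u x) (N:ℝ≥0∞) := by
          apply lintegral_iSup (fun N => hum.min measurable_const)
          intro m n hmn x
          exact min_le_min le_rfl (Nat.cast_le.2 hmn)
  have hmonoInt : ∀ (u : ℝ → ℝ≥0∞), Monotone fun N : ℕ => ∫⁻ x, min (u x) (N:ℝ≥0∞) := by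
    intro u m n hmn
    exact lintegral_mono fun x => min_le_min le_rfl (Nat.cast_le.2 hmn)
  rw [htrunc f hf, htrunc g hg, iSup_rpow _ _ hlam1, iSup_rpow _ _ h0,
    iSup_mul_iSup_monotone _ _
      (fun m n hmn => ENNReal.rpow_le_rpow (hmonoInt f hmn) hlam1.le)
      (fun m n hmn => ENNReal.rpow_le_rpow (hmonoInt g hmn) h0.le)]
  exact iSup_le hkey

open ProbabilityTheory in
lemma gaussianPDF_logconcave (lam : ℝ) (h0 : 0 < lam) (h1 : lam < 1) (x y : ℝ) :
    gaussianPDF 0 1 x ^ (1 - lam) * gaussianPDF 0 1 y ^ lam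
      ≤ gaussianPDF 0 1 ((1 - lam) * x + lam * y) := by
  have hlam1 : (0:ℝ) < 1 - lam := by linarith
  have hpos : ∀ t : ℝ, 0 < gaussianPDFReal 0 1 t := fun t =>
    gaussianPDFReal_pos 0 1 t one_ne_zero
  rw [gaussianPDF, gaussianPDF, gaussianPDF,
    ENNReal.ofReal_rpow_of_pos (hpos x), ENNReal.ofReal_rpow_of_pos (hpos y),
    ← ENNReal.ofReal_mul (Real.rpow_nonneg (hpos x).le _)]
  apply ENNReal.ofReal_le_ofReal
  -- real inequality
  have hformula : ∀ t : ℝ, gaussianPDFReal 0 1 t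
      = (Real.sqrt (2 * Real.pi))⁻¹ * Real.exp (-(t ^ 2) / 2) := by
    intro t
    rw [gaussianPDFReal]
    norm_num
  rw [hformula, hformula, hformula]
  have hc : (0:ℝ) < (Real.sqrt (2 * Real.pi))⁻¹ := by positivity
  have hrp : ∀ (a : ℝ) (p : ℝ), ((Real.sqrt (2 * Real.pi))⁻¹ * Real.exp a) ^ p
      = (Real.sqrt (2 * Real.pi))⁻¹ ^ p * Real.exp (a * p) := by
    intro a p
    rw [Real.mul_rpow hc.le (Real.exp_pos a).le, ← Real.exp_mul]
  rw [hrp, hrp]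
  have hcc : (Real.sqrt (2 * Real.pi))⁻¹ ^ (1 - lam) * (Real.sqrt (2 * Real.pi))⁻¹ ^ lam
      = (Real.sqrt (2 * Real.pi))⁻¹ := by
    rw [← Real.rpow_add hc, sub_add_cancel, Real.rpow_one]
  calc (Real.sqrt (2 * Real.pi))⁻¹ ^ (1 - lam) * Real.exp (-x ^ 2 / 2 * (1 - lam))
        * ((Real.sqrt (2 * Real.pi))⁻¹ ^ lam * Real.exp (-y ^ 2 / 2 * lam))
      = ((Real.sqrt (2 * Real.pi))⁻¹ ^ (1 - lam) * (Real.sqrt (2 * Real.pi))⁻¹ ^ lam)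
          * (Real.exp (-x ^ 2 / 2 * (1 - lam)) * Real.exp (-y ^ 2 / 2 * lam)) := by
        ring
    _ = (Real.sqrt (2 * Real.pi))⁻¹
          * (Real.exp (-x ^ 2 / 2 * (1 - lam)) * Real.exp (-y ^ 2 / 2 * lam)) := by
        rw [hcc]
    _ = (Real.sqrt (2 * Real.pi))⁻¹
          * Real.exp (-x ^ 2 / 2 * (1 - lam) + -y ^ 2 / 2 * lam) := by
        rw [Real.exp_add]
    _ ≤ (Real.sqrt (2 * Real.pi))⁻¹ * Real.exp (-((1 - lam) * x + lam * y) ^ 2 / 2) := by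
        apply mul_le_mul_of_nonneg_left _ hc.le
        apply Real.exp_le_exp.2
        nlinarith [mul_nonneg (mul_nonneg h0.le hlam1.le) (sq_nonneg (x - y))]

open ProbabilityTheory in
lemma GPL1 (lam : ℝ) (h0 : 0 < lam) (h1 : lam < 1) {f g h : ℝ → ℝ≥0∞}
    (hf : Measurable f) (hg : Measurable g) (hh : Measurable h)
    (hyp : ∀ x y : ℝ, f x ^ (1 - lam) * g y ^ lam ≤ h ((1 - lam) * x + lam * y)) :
    (∫⁻ x, f x ∂gaussianReal 0 1) ^ (1 - lam) * (∫⁻ x, g x ∂gaussianReal 0 1) ^ lam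
      ≤ ∫⁻ x, h x ∂gaussianReal 0 1 := by
  have hlam1 : (0:ℝ) < 1 - lam := by linarith
  have hvar : (1 : ℝ≥0) ≠ 0 := one_ne_zero
  rw [gaussianReal_of_var_ne_zero 0 hvar,
    lintegral_withDensity_eq_lintegral_mul volume (measurable_gaussianPDF 0 1) hf,
    lintegral_withDensity_eq_lintegral_mul volume (measurable_gaussianPDF 0 1) hg,
    lintegral_withDensity_eq_lintegral_mul volume (measurable_gaussianPDF 0 1) hh]
  apply PL1 lam h0 h1 ((measurable_gaussianPDF 0 1).mul hf)
    ((measurable_gaussianPDF 0 1).mul hg) ((measurable_gaussianPDF 0 1).mul hh)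
  intro x y
  show (gaussianPDF 0 1 x * f x) ^ (1 - lam) * (gaussianPDF 0 1 y * g y) ^ lam
    ≤ gaussianPDF 0 1 ((1 - lam) * x + lam * y) * h ((1 - lam) * x + lam * y)
  calc (gaussianPDF 0 1 x * f x) ^ (1 - lam) * (gaussianPDF 0 1 y * g y) ^ lam
      = (gaussianPDF 0 1 x ^ (1 - lam) * gaussianPDF 0 1 y ^ lam)
        * (f x ^ (1 - lam) * g y ^ lam) := by
        rw [ENNReal.mul_rpow_of_nonneg _ _ hlam1.le, ENNReal.mul_rpow_of_nonneg _ _ h0.le]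
        ring
    _ ≤ gaussianPDF 0 1 ((1 - lam) * x + lam * y) * h ((1 - lam) * x + lam * y) :=
        mul_le_mul' (gaussianPDF_logconcave lam h0 h1 x y) (hyp x y)

/-- The standard Gaussian product measure on `Fin n → ℝ`. -/
noncomputable def gpi (n : ℕ) : Measure (Fin n → ℝ) :=
  Measure.pi fun _ => ProbabilityTheory.gaussianReal 0 1

instance gpi_prob (n : ℕ) : IsProbabilityMeasure (gpi n) := by
  unfold gpi; infer_instance

lemma GPLn (lam : ℝ) (h0 : 0 < lam) (h1 : lam < 1) :
    ∀ (n : ℕ) (f g h : (Fin n → ℝ) → ℝ≥0∞), Measurable f → Measurable g → Measurable h →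
    (∀ x y : Fin n → ℝ, f x ^ (1 - lam) * g y ^ lam ≤ h ((1 - lam) • x + lam • y)) →
    (∫⁻ x, f x ∂gpi n) ^ (1 - lam) * (∫⁻ x, g x ∂gpi n) ^ lam ≤ ∫⁻ x, h x ∂gpi n := by
  have hlam1 : (0:ℝ) < 1 - lam := by linarith
  intro n
  induction n with
  | zero =>
    intro f g h hf hg hh hyp
    have hpi : gpi 0 = Measure.dirac (isEmptyElim : Fin 0 → ℝ) := Measure.pi_of_empty _
    rw [hpi, lintegral_dirac' _ hf, lintegral_dirac' _ hg, lintegral_dirac' _ hh]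
    have hx : (1 - lam) • (isEmptyElim : Fin 0 → ℝ) + lam • isEmptyElim = isEmptyElim :=
      funext fun i => i.elim0
    have := hyp isEmptyElim isEmptyElim
    rwa [hx] at this
  | succ n ih =>
    intro f g h hf hg hh hyp
    set e : (Fin (n+1) → ℝ) ≃ᵐ ℝ × (Fin n → ℝ) :=
      MeasurableEquiv.piFinSuccAbove (fun _ => ℝ) 0 with he_def
    have hmp : MeasurePreserving e (gpi (n+1))
        ((ProbabilityTheory.gaussianReal 0 1).prod (gpi n)) :=
      measurePreserving_piFinSuccAbove (fun _ => ProbabilityTheory.gaussianReal 0 1) 0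
    -- linearity of e
    have he_lin : ∀ (x y : Fin (n+1) → ℝ),
        e ((1 - lam) • x + lam • y) = (1 - lam) • e x + lam • e y := by
      intro x y
      rfl
    set f' : ℝ × (Fin n → ℝ) → ℝ≥0∞ := fun p => f (e.symm p) with hf'_def
    set g' : ℝ × (Fin n → ℝ) → ℝ≥0∞ := fun p => g (e.symm p) with hg'_def
    set h' : ℝ × (Fin n → ℝ) → ℝ≥0∞ := fun p => h (e.symm p) with hh'_def
    have hf'm : Measurable f' := hf.comp e.symm.measurable
    have hg'm : Measurable g' := hg.comp e.symm.measurable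
    have hh'm : Measurable h' := hh.comp e.symm.measurable
    have hyp' : ∀ p q : ℝ × (Fin n → ℝ),
        f' p ^ (1 - lam) * g' q ^ lam ≤ h' ((1 - lam) • p + lam • q) := by
      intro p q
      have hp : p = e (e.symm p) := (e.apply_symm_apply p).symm
      have hq : q = e (e.symm q) := (e.apply_symm_apply q).symm
      have hmid : (1 - lam) • p + lam • q
          = e ((1 - lam) • (e.symm p) + lam • (e.symm q)) := by
        rw [he_lin, ← hp, ← hq]
      have hval : h' ((1 - lam) • p + lam • q)
          = h ((1 - lam) • (e.symm p) + lam • (e.symm q)) := by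
        simp only [hh'_def]
        rw [hmid, e.symm_apply_apply]
      rw [hval]
      exact hyp (e.symm p) (e.symm q)
    -- transfer integrals
    have hint : ∀ (u : (Fin (n+1) → ℝ) → ℝ≥0∞), Measurable u →
        ∫⁻ x, u x ∂gpi (n+1)
          = ∫⁻ p, u (e.symm p) ∂((ProbabilityTheory.gaussianReal 0 1).prod (gpi n)) := by
      intro u hu
      calc ∫⁻ x, u x ∂gpi (n+1)
          = ∫⁻ a, (u ∘ e.symm) (e a) ∂gpi (n+1) := by
            apply lintegral_congr
            intro x
            simp [Function.comp_apply, e.symm_apply_apply]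
        _ = ∫⁻ p, (u ∘ e.symm) p
              ∂((ProbabilityTheory.gaussianReal 0 1).prod (gpi n)) :=
            hmp.lintegral_comp (hu.comp e.symm.measurable)
        _ = _ := rfl
    rw [hint f hf, hint g hg, hint h hh]
    -- Fubini
    rw [lintegral_prod _ hf'm.aemeasurable, lintegral_prod _ hg'm.aemeasurable,
      lintegral_prod _ hh'm.aemeasurable]
    -- apply 1-dim GPL to the marginals
    apply GPL1 lam h0 h1 (hf'm.lintegral_prod_right') (hg'm.lintegral_prod_right')
      (hh'm.lintegral_prod_right')
    intro x y
    -- apply the induction hypothesis to the fibers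
    have hfiber := ih (fun v => f' (x, v)) (fun v => g' (y, v))
      (fun v => h' ((1 - lam) * x + lam * y, v))
      (hf'm.comp (measurable_prodMk_left)) (hg'm.comp (measurable_prodMk_left))
      (hh'm.comp (measurable_prodMk_left))
      (by
        intro v w
        show f' (x, v) ^ (1 - lam) * g' (y, w) ^ lam
          ≤ h' ((1 - lam) * x + lam * y, (1 - lam) • v + lam • w)
        have heq : (((1 - lam) * x + lam * y, (1 - lam) • v + lam • w) : ℝ × (Fin n → ℝ))
            = (1 - lam) • (x, v) + lam • (y, w) := by
          simp [Prod.ext_iff, smul_eq_mul]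
        rw [heq]
        exact hyp' (x, v) (y, w))
    exact hfiber

section Application

variable {d : ℕ}

/-- The constraint set `{w | A w ≤ b}`. -/
def Kset (A : Matrix (Fin d) (Fin d) ℝ) (b : Fin d → ℝ) : Set (Fin d → ℝ) :=
  {w | ∀ i, A.mulVec w i ≤ b i}

lemma measurable_mulVec_apply (A : Matrix (Fin d) (Fin d) ℝ) (i : Fin d) :
    Measurable fun w : Fin d → ℝ => A.mulVec w i := by
  have hrw : (fun w : Fin d → ℝ => A.mulVec w i) = fun w => ∑ j, A i j * w j := by
    funext w
    simp [Matrix.mulVec, dotProduct]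
  rw [hrw]
  exact Finset.measurable_sum _ (fun j _ => (measurable_pi_apply j).const_mul _)

lemma measurable_mulVecFn (A : Matrix (Fin d) (Fin d) ℝ) :
    Measurable fun w : Fin d → ℝ => A.mulVec w :=
  measurable_pi_lambda _ (fun i => measurable_mulVec_apply A i)

lemma Kset_meas (A : Matrix (Fin d) (Fin d) ℝ) (b : Fin d → ℝ) :
    MeasurableSet (Kset A b) := by
  have hrw : Kset A b = ⋂ i, {w : Fin d → ℝ | A.mulVec w i ≤ b i} := by
    ext w; simp [Kset, Set.mem_iInter]
  rw [hrw]
  exact MeasurableSet.iInter fun i =>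
    measurableSet_le (measurable_mulVec_apply A i) measurable_const

lemma upperSet_meas (z : Fin d → ℝ) :
    MeasurableSet {y : Fin d → ℝ | ∀ i, y i ≤ z i} := by
  have hrw : {y : Fin d → ℝ | ∀ i, y i ≤ z i} = ⋂ i, {y : Fin d → ℝ | y i ≤ z i} := by
    ext y; simp [Set.mem_iInter]
  rw [hrw]
  exact MeasurableSet.iInter fun i =>
    measurableSet_le (measurable_pi_apply i) measurable_const

lemma stdGaussianCdf_eq (A : Matrix (Fin d) (Fin d) ℝ) (z : Fin d → ℝ) :
    stdGaussianCdf A z = ((gpi d) (Kset A z)).toReal := by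
  unfold stdGaussianCdf
  rw [show (MeasureTheory.Measure.pi fun _ : Fin d => ProbabilityTheory.gaussianReal 0 1)
      = gpi d from rfl]
  rw [Measure.map_apply (measurable_mulVecFn A) (upperSet_meas z)]
  rfl

lemma Kset_combo (A : Matrix (Fin d) (Fin d) ℝ) (lam : ℝ) (hlam0 : 0 ≤ lam)
    (hlam1 : lam ≤ 1) (b c : Fin d → ℝ) {x y : Fin d → ℝ}
    (hx : x ∈ Kset A b) (hy : y ∈ Kset A c) :
    (1 - lam) • x + lam • y ∈ Kset A ((1 - lam) • b + lam • c) := by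
  intro i
  have hlin : A.mulVec ((1 - lam) • x + lam • y) i
      = (1 - lam) * A.mulVec x i + lam * A.mulVec y i := by
    rw [Matrix.mulVec_add, Matrix.mulVec_smul, Matrix.mulVec_smul]
    simp [smul_eq_mul]
  rw [hlin]
  have h1 : (1 - lam) * A.mulVec x i ≤ (1 - lam) * b i :=
    mul_le_mul_of_nonneg_left (hx i) (by linarith)
  have h2 : lam * A.mulVec y i ≤ lam * c i :=
    mul_le_mul_of_nonneg_left (hy i) hlam0
  have : ((1 - lam) • b + lam • c) i = (1 - lam) * b i + lam * c i := by
    simp [smul_eq_mul]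
  rw [this]
  linarith

lemma gpi_logconcave (A : Matrix (Fin d) (Fin d) ℝ) (lam : ℝ) (h0 : 0 < lam)
    (h1 : lam < 1) (b c : Fin d → ℝ) :
    (gpi d (Kset A b)) ^ (1 - lam) * (gpi d (Kset A c)) ^ lam
      ≤ gpi d (Kset A ((1 - lam) • b + lam • c)) := by
  have hlam1 : (0:ℝ) < 1 - lam := by linarith
  have hKb := Kset_meas A b
  have hKc := Kset_meas A c
  have hKm := Kset_meas A ((1 - lam) • b + lam • c)
  have hmain := GPLn lam h0 h1 d
    ((Kset A b).indicator (1 : (Fin d → ℝ) → ℝ≥0∞))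
    ((Kset A c).indicator (1 : (Fin d → ℝ) → ℝ≥0∞))
    ((Kset A ((1 - lam) • b + lam • c)).indicator (1 : (Fin d → ℝ) → ℝ≥0∞))
    (measurable_one.indicator hKb) (measurable_one.indicator hKc)
    (measurable_one.indicator hKm) ?_
  · rwa [lintegral_indicator_one hKb, lintegral_indicator_one hKc,
      lintegral_indicator_one hKm] at hmain
  · intro x y
    by_cases hx : x ∈ Kset A b
    · by_cases hy : y ∈ Kset A c
      · have hmem := Kset_combo A lam h0.le h1.le b c hx hy
        rw [Set.indicator_of_mem hx, Set.indicator_of_mem hy, Set.indicator_of_mem hmem]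
        simp [ENNReal.one_rpow]
      · rw [Set.indicator_of_notMem hy]
        rw [ENNReal.zero_rpow_of_pos h0, mul_zero]
        exact zero_le
    · rw [Set.indicator_of_notMem hx]
      rw [ENNReal.zero_rpow_of_pos hlam1, zero_mul]
      exact zero_le

/-- Box of radius `R`. -/
def Bx (d : ℕ) (R : ℝ) : Set (Fin d → ℝ) := {w | ∀ j, |w j| ≤ R}

lemma Bx_meas (R : ℝ) : MeasurableSet (Bx d R) := by
  have hrw : Bx d R = Set.pi Set.univ (fun _ : Fin d => Set.Icc (-R) R) := by
    ext w
    simp [Bx, abs_le, Set.pi_univ_Icc, Pi.le_def, forall_and]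
  rw [hrw]
  exact MeasurableSet.pi (Set.countable_univ) (fun _ _ => measurableSet_Icc)

lemma gpi_Bx (R : ℝ) :
    gpi d (Bx d R) = (ProbabilityTheory.gaussianReal 0 1 (Set.Icc (-R) R)) ^ d := by
  have hrw : Bx d R = Set.pi Set.univ (fun _ : Fin d => Set.Icc (-R) R) := by
    ext w
    simp [Bx, abs_le, Set.pi_univ_Icc, Pi.le_def, forall_and]
  rw [hrw]
  unfold gpi
  rw [Measure.pi_pi]
  simp [Finset.prod_const, Finset.card_univ]

lemma exists_box (η : ℝ≥0∞) (hη : 0 < η) :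
    ∃ N : ℕ, 1 - η < gpi d (Bx d (N : ℝ)) := by
  have hmono : Monotone fun n : ℕ => Set.Icc (-(n:ℝ)) (n:ℝ) := by
    intro m n hmn
    exact Set.Icc_subset_Icc (neg_le_neg (by exact_mod_cast hmn)) (by exact_mod_cast hmn)
  have hunion : (⋃ n : ℕ, Set.Icc (-(n:ℝ)) (n:ℝ)) = Set.univ := by
    apply Set.eq_univ_of_forall
    intro x
    obtain ⟨n, hn⟩ := exists_nat_ge |x|
    exact Set.mem_iUnion.2 ⟨n, ⟨by linarith [neg_abs_le x], by linarith [le_abs_self x]⟩⟩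
  have htend : Filter.Tendsto
      (fun n : ℕ => ProbabilityTheory.gaussianReal 0 1 (Set.Icc (-(n:ℝ)) (n:ℝ)))
      Filter.atTop (nhds 1) := by
    have := tendsto_measure_iUnion_atTop
      (μ := ProbabilityTheory.gaussianReal 0 1) hmono
    rwa [hunion, measure_univ] at this
  have htendpow : Filter.Tendsto
      (fun n : ℕ => (ProbabilityTheory.gaussianReal 0 1 (Set.Icc (-(n:ℝ)) (n:ℝ))) ^ d)
      Filter.atTop (nhds 1) := by
    have := ENNReal.Tendsto.pow (n := d) htend
    rwa [one_pow] at this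
  have hlt : (1 : ℝ≥0∞) - η < 1 :=
    ENNReal.sub_lt_self ENNReal.one_ne_top one_ne_zero hη.ne'
  obtain ⟨N, hN⟩ := (htendpow.eventually (eventually_gt_nhds hlt)).exists
  refine ⟨N, ?_⟩
  rw [gpi_Bx]
  exact hN

lemma mulVec_bound (A : Matrix (Fin d) (Fin d) ℝ) (R : ℝ) (hR : 0 ≤ R)
    {w : Fin d → ℝ} (hw : w ∈ Bx d R) (i : Fin d) :
    |A.mulVec w i| ≤ (1 + ∑ i, ∑ j, |A i j|) * R := by
  have hrow : |A.mulVec w i| ≤ (∑ j, |A i j|) * R := by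
    have h1 : A.mulVec w i = ∑ j, A i j * w j := by
      simp [Matrix.mulVec, dotProduct]
    rw [h1]
    calc |∑ j, A i j * w j| ≤ ∑ j, |A i j * w j| := Finset.abs_sum_le_sum_abs _ _
      _ ≤ ∑ j, |A i j| * R := by
          apply Finset.sum_le_sum
          intro j _
          rw [abs_mul]
          exact mul_le_mul_of_nonneg_left (hw j) (abs_nonneg _)
      _ = (∑ j, |A i j|) * R := by rw [Finset.sum_mul]
  refine hrow.trans (mul_le_mul_of_nonneg_right ?_ hR)
  have h2 : (∑ j, |A i j|) ≤ ∑ i, ∑ j, |A i j| :=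
    Finset.single_le_sum (f := fun i => ∑ j, |A i j|)
      (fun i _ => Finset.sum_nonneg fun j _ => abs_nonneg _) (Finset.mem_univ i)
  linarith

end Application

lemma endgame (ε δ lam p q : ℝ) (hε0 : 0 < ε) (hε1 : ε < 1) (hδ0 : 0 ≤ δ)
    (hδs : δ ≤ (1 - ε) / 2)
    (hp : 1 - ε - δ ≤ p) (hq : 1 - ε / 2 ≤ q)
    (hlam0 : 0 ≤ lam) (hlam1 : lam ≤ 1)
    (hlam_ge : 2 * δ / ((1 - ε) * Real.log ((1 - ε / 2) / (1 - ε))) ≤ lam) :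
    1 - ε ≤ p ^ (1 - lam) * q ^ lam := by
  have h1ε : 0 < 1 - ε := by linarith
  set pt := 1 - ε - δ with hpt_def
  set qt := 1 - ε / 2 with hqt_def
  have hptpos : 0 < pt := by rw [hpt_def]; linarith
  have hqtpos : 0 < qt := by rw [hqt_def]; linarith
  have hqt_gt : 1 - ε < qt := by rw [hqt_def]; linarith
  set c2 := Real.log (qt / (1 - ε)) with hc2
  have hc2pos : 0 < c2 := Real.log_pos (by rw [lt_div_iff₀ h1ε]; linarith)
  have hmono : pt ^ (1 - lam) * qt ^ lam ≤ p ^ (1 - lam) * q ^ lam := by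
    apply mul_le_mul (Real.rpow_le_rpow hptpos.le hp (by linarith))
      (Real.rpow_le_rpow hqtpos.le hq hlam0) (Real.rpow_nonneg hqtpos.le _)
      (Real.rpow_nonneg (le_trans hptpos.le hp) _)
  refine le_trans ?_ hmono
  have hlog : Real.log (1 - ε) ≤ (1 - lam) * Real.log pt + lam * Real.log qt := by
    have hA : Real.log (1 - ε) - Real.log pt ≤ 2 * δ / (1 - ε) := by
      rw [← Real.log_div h1ε.ne' hptpos.ne']
      refine (Real.log_le_sub_one_of_pos (div_pos h1ε hptpos)).trans ?_
      have h2 : (1 - ε) / pt - 1 = δ / pt := by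
        field_simp [hpt_def]
        linarith
      rw [h2]
      have hpt_ge : (1 - ε) / 2 ≤ pt := by rw [hpt_def]; linarith
      calc δ / pt ≤ δ / ((1 - ε) / 2) :=
            div_le_div_of_nonneg_left hδ0 (by linarith) hpt_ge
        _ = 2 * δ / (1 - ε) := by
            field_simp
    have hB : c2 ≤ Real.log qt - Real.log pt := by
      rw [hc2, Real.log_div hqtpos.ne' h1ε.ne']
      have h3 : Real.log pt ≤ Real.log (1 - ε) :=
        (Real.log_le_log_iff hptpos h1ε).2 (by rw [hpt_def]; linarith)
      linarith
    have hlam_c2 : 2 * δ / (1 - ε) ≤ lam * c2 := by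
      have h4 : 2 * δ / ((1 - ε) * c2) * c2 = 2 * δ / (1 - ε) := by
        field_simp
      have h5 : 2 * δ / ((1 - ε) * c2) * c2 ≤ lam * c2 := by
        apply mul_le_mul_of_nonneg_right _ hc2pos.le
        rw [hqt_def] at hc2
        rw [hc2] at hlam_ge ⊢
        exact hlam_ge
      linarith
    have h6 : lam * c2 ≤ lam * (Real.log qt - Real.log pt) :=
      mul_le_mul_of_nonneg_left hB hlam0
    nlinarith
  calc 1 - ε = Real.exp (Real.log (1 - ε)) := (Real.exp_log h1ε).symm
    _ ≤ Real.exp ((1 - lam) * Real.log pt + lam * Real.log qt) := Real.exp_le_exp.2 hlog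
    _ = pt ^ (1 - lam) * qt ^ lam := by
        rw [Real.exp_add, Real.rpow_def_of_pos hptpos, Real.rpow_def_of_pos hqtpos,
          mul_comm (Real.log pt), mul_comm (Real.log qt)]

end QinvShift

set_option maxHeartbeats 1000000

/-- **Outer shift property of the multidimensional Gaussian inverse set.**
For a `d×d` positive semidefinite `V = A·Aᵀ` and `ε ∈ (0,1)` there are `D₂ > 0` and
`δ₂ > 0` such that for all `0 ≤ δ < δ₂` and every `z` with `P[Z ≤ z] ≥ 1−ε−δ`,
`P[Z ≤ z + D₂·δ·1] ≥ 1−ε`. -/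
theorem Qinv_outer_shift {d : ℕ} (V A : Matrix (Fin d) (Fin d) ℝ)
    (hV : V.PosSemidef) (hA : A * A.transpose = V)
    (ε : ℝ) (hε : ε ∈ Set.Ioo (0 : ℝ) 1) :
    ∃ D₂ : ℝ, 0 < D₂ ∧ ∃ δ₂ : ℝ, 0 < δ₂ ∧
      ∀ δ : ℝ, 0 ≤ δ → δ < δ₂ →
        ∀ z : Fin d → ℝ, 1 - ε - δ ≤ stdGaussianCdf A z →
          1 - ε ≤ stdGaussianCdf A (fun i => z i + D₂ * δ) := by
  open QinvShift in
  obtain ⟨hε0, hε1⟩ := hε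
  have h1ε : (0:ℝ) < 1 - ε := by linarith
  set SB := (1 + ∑ i, ∑ j, |A i j| : ℝ) with hSB
  have hSBsum : (0:ℝ) ≤ ∑ i, ∑ j, |A i j| :=
    Finset.sum_nonneg fun i _ => Finset.sum_nonneg fun j _ => abs_nonneg _
  have hSBpos : 0 < SB := by rw [hSB]; linarith
  obtain ⟨R1, hR1⟩ := QinvShift.exists_box (d := d) (ENNReal.ofReal ((1 - ε)/2))
    (ENNReal.ofReal_pos.2 (by linarith))
  obtain ⟨R2, hR2⟩ := QinvShift.exists_box (d := d) (ENNReal.ofReal (ε/2))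
    (ENNReal.ofReal_pos.2 (by linarith))
  set r1 := (R1 : ℝ) + 1 with hr1
  set r2 := (R2 : ℝ) + 1 with hr2
  have hr1pos : (0:ℝ) < r1 := by positivity
  have hr2pos : (0:ℝ) < r2 := by positivity
  have hbox_mono : ∀ (R R' : ℝ), R ≤ R' → Bx d R ⊆ Bx d R' := by
    intro R R' hRR w hw j
    exact (hw j).trans hRR
  have hR1' : 1 - ENNReal.ofReal ((1 - ε)/2) < QinvShift.gpi d (Bx d r1) :=
    lt_of_lt_of_le hR1 (measure_mono (hbox_mono _ _ (by rw [hr1]; linarith)))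
  have hR2' : 1 - ENNReal.ofReal (ε/2) < QinvShift.gpi d (Bx d r2) :=
    lt_of_lt_of_le hR2 (measure_mono (hbox_mono _ _ (by rw [hr2]; linarith)))
  set T := SB * r1 + SB * r2 with hT
  have hTpos : 0 < T := by rw [hT]; positivity
  set c2 := Real.log ((1 - ε/2) / (1 - ε)) with hc2
  have hc2pos : 0 < c2 := Real.log_pos (by rw [lt_div_iff₀ h1ε]; linarith)
  set D₂ := 2 * T / ((1 - ε) * c2) + 1 with hD2
  have hD2pos : 0 < D₂ := by
    have : 0 < 2 * T / ((1 - ε) * c2) := by positivity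
    rw [hD2]; linarith
  set δ₂ := min ((1 - ε)/2) (T / D₂) with hδ₂
  have hδ₂pos : 0 < δ₂ := lt_min (by linarith) (div_pos hTpos hD2pos)
  refine ⟨D₂, hD2pos, δ₂, hδ₂pos, ?_⟩
  intro δ hδ0 hδlt z hz
  rw [QinvShift.stdGaussianCdf_eq] at hz ⊢
  rcases eq_or_lt_of_le hδ0 with hδeq | hδpos
  · have hzz : (fun i => z i + D₂ * δ) = z := by
      funext i; rw [← hδeq]; ring
    rw [hzz]
    calc 1 - ε = 1 - ε - 0 := by ring
      _ = 1 - ε - δ := by rw [hδeq]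
      _ ≤ _ := hz
  have hδs : δ ≤ (1 - ε)/2 := (le_of_lt hδlt).trans (min_le_left _ _)
  have hδT : D₂ * δ < T := by
    have h7 : δ < T / D₂ := lt_of_lt_of_le hδlt (min_le_right _ _)
    calc D₂ * δ < D₂ * (T / D₂) := mul_lt_mul_of_pos_left h7 hD2pos
      _ = T := by field_simp
  set lam := D₂ * δ / T with hlam
  have hlam0 : 0 < lam := by rw [hlam]; positivity
  have hlam1 : lam < 1 := by rw [hlam, div_lt_one hTpos]; exact hδT
  have hfin : ∀ b : Fin d → ℝ, QinvShift.gpi d (Kset A b) ≠ ⊤ :=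
    fun b => measure_ne_top _ _
  have hz_ennreal : ENNReal.ofReal ((1 - ε)/2) ≤ QinvShift.gpi d (Kset A z) := by
    have h2 : (1 - ε)/2 ≤ (QinvShift.gpi d (Kset A z)).toReal := by linarith
    calc ENNReal.ofReal ((1-ε)/2)
        ≤ ENNReal.ofReal ((QinvShift.gpi d (Kset A z)).toReal) :=
          ENNReal.ofReal_le_ofReal h2
      _ = QinvShift.gpi d (Kset A z) := ENNReal.ofReal_toReal (hfin z)
  -- intersection with box r1 is nonempty
  have hKboxne : (Kset A z ∩ Bx d r1).Nonempty := by
    by_contra hcon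
    rw [Set.not_nonempty_iff_eq_empty] at hcon
    have hdisj : Disjoint (Kset A z) (Bx d r1) := Set.disjoint_iff_inter_eq_empty.2 hcon
    have hle : QinvShift.gpi d (Kset A z) + QinvShift.gpi d (Bx d r1) ≤ 1 := by
      rw [← measure_union hdisj (QinvShift.Bx_meas r1)]
      exact prob_le_one
    have hgt : (1:ℝ≥0∞) < QinvShift.gpi d (Kset A z) + QinvShift.gpi d (Bx d r1) := by
      have hsum : (1:ℝ≥0∞) = (1 - ENNReal.ofReal ((1-ε)/2)) + ENNReal.ofReal ((1-ε)/2) := by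
        rw [tsub_add_cancel_of_le (ENNReal.ofReal_le_one.2 (by linarith))]
      rw [hsum, add_comm (QinvShift.gpi d (Kset A z))]
      exact ENNReal.add_lt_add_of_lt_of_le ENNReal.ofReal_ne_top hR1' hz_ennreal
    exact absurd hle (not_le.2 hgt)
  obtain ⟨w, hwK, hwB⟩ := hKboxne
  have hzlb : ∀ i, -(SB * r1) ≤ z i := by
    intro i
    have h1 := QinvShift.mulVec_bound A r1 hr1pos.le hwB i
    rw [← hSB] at h1
    have h2 := hwK i
    have h3 := (abs_le.1 h1).1
    linarith
  have hbox2 : Bx d r2 ⊆ Kset A (fun i => z i + T) := by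
    intro w' hw' i
    have h1 := QinvShift.mulVec_bound A r2 hr2pos.le hw' i
    rw [← hSB] at h1
    have h2 := (abs_le.1 h1).2
    have h3 := hzlb i
    show A.mulVec w' i ≤ z i + T
    rw [hT]
    linarith
  have hq_ennreal : ENNReal.ofReal (1 - ε/2) ≤ QinvShift.gpi d (Kset A (fun i => z i + T)) := by
    refine le_trans ?_ (measure_mono hbox2)
    have h4 : ENNReal.ofReal (1 - ε/2) ≤ 1 - ENNReal.ofReal (ε/2) := by
      apply ENNReal.le_sub_of_add_le_right ENNReal.ofReal_ne_top
      rw [← ENNReal.ofReal_add (by linarith) (by linarith)]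
      rw [show (1 - ε/2) + ε/2 = 1 by ring]
      simp
    exact h4.trans hR2'.le
  have hq_real : 1 - ε/2 ≤ (QinvShift.gpi d (Kset A (fun i => z i + T))).toReal := by
    have h5 := ENNReal.toReal_mono (hfin _) hq_ennreal
    rwa [ENNReal.toReal_ofReal (by linarith)] at h5
  have hlc := QinvShift.gpi_logconcave A lam hlam0 hlam1 z (fun i => z i + T)
  have hcombo : (1 - lam) • z + lam • (fun i => z i + T) = fun i => z i + D₂ * δ := by
    funext i
    have hTne : T ≠ 0 := hTpos.ne'
    simp only [Pi.add_apply, Pi.smul_apply, smul_eq_mul]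
    rw [hlam]
    field_simp [hTne]
    ring
  rw [hcombo] at hlc
  have hreal : ((QinvShift.gpi d (Kset A z)).toReal) ^ (1 - lam)
      * ((QinvShift.gpi d (Kset A (fun i => z i + T))).toReal) ^ lam
      ≤ (QinvShift.gpi d (Kset A (fun i => z i + D₂ * δ))).toReal := by
    have h5 := ENNReal.toReal_mono (hfin _) hlc
    rw [ENNReal.toReal_mul, ← ENNReal.toReal_rpow, ← ENNReal.toReal_rpow] at h5
    exact h5
  refine le_trans (QinvShift.endgame ε δ lam _ _ hε0 hε1 hδ0 hδs hz hq_real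
    hlam0.le hlam1.le ?_) hreal
  rw [hlam, hD2]
  have hge : (2 * T / ((1 - ε) * c2) + 1) * δ / T = 2 * δ / ((1 - ε) * c2) + δ / T := by
    field_simp [hTpos.ne', h1ε.ne', hc2pos.ne']
  rw [← hc2, hge]
  have : 0 ≤ δ / T := div_nonneg hδ0 hTpos.le
  linarith
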